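/- Let G(f, a) = f²|a|² + ½(1 - f²)² for (f, a) ∈ ℝ × ℝ³. Then for all f, g ∈ ℝ and a, b ∈ ℝ³, the second derivative of t ↦ G(f + tg, a + tb) at t = 0 equals 2|f b + 2g a|² + 6 g² (f² - |a|² - 1/3). -/

import Mathlib

open scoped RealInnerProductSpace

lemma norm_expand (a b : EuclideanSpace ℝ (Fin 3)) (t : ℝ) :
    ‖a + t • b‖^2 = ‖a‖^2 + 2*t*⟪a, b⟫ + t^2*‖b‖^2 := by
  rw [norm_add_sq_real, real_inner_smul_right, norm_smul]
  simp [mul_pow, sq_abs]; ring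

lemma deriv_poly (A B C : ℝ) (f g : ℝ) :
    deriv (fun t : ℝ =>
      (f + t*g)^2 * (A + 2*t*B + t^2*C) + (1/2) * (1 - (f + t*g)^2)^2)
    = fun t : ℝ =>
      2*g*(f + t*g) * (A + 2*t*B + t^2*C) + (f + t*g)^2 * (2*B + 2*t*C)
        - 2*g*(f + t*g)*(1 - (f + t*g)^2) := by
  funext t
  have h : HasDerivAt (fun t : ℝ =>
      (f + t*g)^2 * (A + 2*t*B + t^2*C) + (1/2) * (1 - (f + t*g)^2)^2)
      (2*g*(f + t*g) * (A + 2*t*B + t^2*C) + (f + t*g)^2 * (2*B + 2*t*C)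
        - 2*g*(f + t*g)*(1 - (f + t*g)^2)) t := by
    have h1 : HasDerivAt (fun t : ℝ => f + t*g) g t := by
      simpa using ((hasDerivAt_id t).mul_const g).const_add f
    have h2 : HasDerivAt (fun t : ℝ => A + 2*t*B + t^2*C)
        (2*B + 2*t*C) t := by
      have := (((hasDerivAt_id t).const_mul 2).mul_const B).const_add A
      have := this.add (((hasDerivAt_pow 2 t)).mul_const C)
      simpa [Pi.add_def, mul_comm, mul_assoc, mul_left_comm] using this
    have := ((h1.pow 2).mul h2).add
      ((((h1.pow 2).const_sub 1).pow 2).const_mul (1/2))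
    refine this.congr_deriv ?_
    simp only [Pi.pow_apply]
    push_cast
    ring
  exact h.deriv

theorem stmt6 (f g : ℝ) (a b : EuclideanSpace ℝ (Fin 3)) :
    deriv (deriv (fun t : ℝ =>
        (f + t*g)^2 * ‖a + t • b‖^2 + (1/2) * (1 - (f + t*g)^2)^2)) 0
      = 2 * ‖f • b + (2*g) • a‖^2 + 6 * g^2 * (f^2 - ‖a‖^2 - 1/3) := by
  have hfun : (fun t : ℝ =>
        (f + t*g)^2 * ‖a + t • b‖^2 + (1/2) * (1 - (f + t*g)^2)^2)
      = fun t : ℝ =>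
        (f + t*g)^2 * (‖a‖^2 + 2*t*⟪a, b⟫ + t^2*‖b‖^2)
          + (1/2) * (1 - (f + t*g)^2)^2 := by
    funext t; rw [norm_expand]
  rw [hfun, deriv_poly]
  have hrhs : ‖f • b + (2*g) • a‖^2
      = f^2*‖b‖^2 + 4*f*g*⟪a, b⟫ + 4*g^2*‖a‖^2 := by
    rw [norm_add_sq_real, real_inner_smul_left, real_inner_smul_right,
      norm_smul, norm_smul]
    simp [mul_pow, sq_abs, real_inner_comm a b]; ring
  set A := ‖a‖^2; set B := (⟪a, b⟫ : ℝ); set C := ‖b‖^2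
  have h : HasDerivAt (fun t : ℝ =>
      2*g*(f + t*g) * (A + 2*t*B + t^2*C) + (f + t*g)^2 * (2*B + 2*t*C)
        - 2*g*(f + t*g)*(1 - (f + t*g)^2))
      (2*(f^2*C + 4*f*g*B + 4*g^2*A) + 6*g^2*(f^2 - A - 1/3)) 0 := by
    have h1 : HasDerivAt (fun t : ℝ => f + t*g) g 0 := by
      simpa using ((hasDerivAt_id (0:ℝ)).mul_const g).const_add f
    have h2 : HasDerivAt (fun t : ℝ => A + 2*t*B + t^2*C)
        (2*B + 2*0*C) 0 := by
      have := ((((hasDerivAt_id (0:ℝ)).const_mul 2).mul_const B).const_add A).add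
        ((hasDerivAt_pow 2 (0:ℝ)).mul_const C)
      simpa [Pi.add_def, mul_comm, mul_assoc, mul_left_comm] using this
    have h3 : HasDerivAt (fun t : ℝ => 2*B + 2*t*C) (2*C) 0 := by
      simpa [mul_assoc] using (((hasDerivAt_id (0:ℝ)).const_mul 2).mul_const C).const_add (2*B)
    have := (((h1.const_mul (2*g)).mul h2).add ((h1.pow 2).mul h3)).sub
      ((h1.const_mul (2*g)).mul ((h1.pow 2).const_sub 1))
    refine this.congr_deriv ?_
    simp only [Pi.pow_apply]
    push_cast
    ring
  rw [h.deriv, hrhs]
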